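/- Let β > 2, K > 0, 0 < λ < ∞, and let φ = {X_i} be a locally finite set of points in ℝ² \ {0} (every bounded subset of ℝ² contains finitely many points of φ) satisfying the empirical homogeneity condition #(φ ∩ B_0(r))/(πr²) → λ as r → ∞, where B_0(r) is the open ball of radius r centered at the origin. Then for every s ∈ ℝ, the sum Σ_{X_i ∈ φ} G( (s − β·log(K|X_i|) − n/β)/√n ) converges, as n → ∞, to (λπ/K²) · e^{2s/β}. -/

import Mathlib

open MeasureTheory Real Filter

/-- The standard normal cumulative distribution function
`G(t) = ∫_{-∞}^t e^{-u²/2} du / √(2π)`. -/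
noncomputable def stdNormalCDF (t : ℝ) : ℝ :=
  ∫ u in Set.Iic t, Real.exp (-u ^ 2 / 2) / Real.sqrt (2 * Real.pi)

noncomputable def gpdf (u : ℝ) : ℝ := Real.exp (-u ^ 2 / 2) / Real.sqrt (2 * Real.pi)

lemma gpdf_nonneg (u : ℝ) : 0 ≤ gpdf u := div_nonneg (Real.exp_nonneg _) (Real.sqrt_nonneg _)

lemma gpdf_cont : Continuous gpdf := by unfold gpdf; fun_prop

lemma gpdf_integrable : Integrable gpdf := by
  have : Integrable (fun u : ℝ => Real.exp (-(1/2) * u ^ 2)) :=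
    integrable_exp_neg_mul_sq (by norm_num)
  have h := this.div_const (Real.sqrt (2 * Real.pi))
  convert h using 2 with u
  unfold gpdf; ring_nf

lemma gauss_total : ∫ u, gpdf u = 1 := by
  unfold gpdf
  rw [integral_div]
  have h := integral_gaussian (1/2)
  have h2 : ∫ u : ℝ, Real.exp (-u ^ 2 / 2) = Real.sqrt (π / (1/2)) := by
    rw [← h]; congr 1 with u; ring_nf
  rw [h2]
  have : (π / (1/2)) = 2 * π := by ring
  rw [this, div_self (by positivity)]

lemma mgf_key (c u : ℝ) : Real.exp (-(c * u)) * gpdf u = Real.exp (c ^ 2 / 2) * gpdf (u + c) := by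
  unfold gpdf
  rw [← mul_div_assoc, ← mul_div_assoc, ← Real.exp_add, ← Real.exp_add]
  congr 2; ring

lemma mgf_eq (c : ℝ) : ∫ u, Real.exp (-(c * u)) * gpdf u = Real.exp (c ^ 2 / 2) := by
  simp_rw [mgf_key]
  rw [integral_const_mul, integral_add_right_eq_self gpdf c, gauss_total, mul_one]

lemma mgf_integrable (c : ℝ) : Integrable (fun u => Real.exp (-(c * u)) * gpdf u) := by
  simp_rw [mgf_key]
  exact (gpdf_integrable.comp_add_right c).const_mul _

lemma count_tsum {E : Type*} (φ B : Set E) (hfin : (φ ∩ B).Finite) (c : ℝ) :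
    ∑' x : φ, Set.indicator B (fun _ => c) ↑x = (Nat.card ↥(φ ∩ B) : ℝ) * c := by
  have hpre : (Subtype.val ⁻¹' B : Set ↥φ) = Subtype.val ⁻¹' (φ ∩ B) := by
    ext x; simp [x.2]
  have hfin' : (Subtype.val ⁻¹' B : Set ↥φ).Finite := by
    rw [hpre]; exact hfin.preimage (Subtype.val_injective.injOn)
  have h1 : (fun x : φ => Set.indicator B (fun _ => c) ↑x)
      = fun x : φ => Set.indicator (Subtype.val ⁻¹' B : Set ↥φ) (fun _ => c) x := by
    ext x; rfl
  rw [h1, ← tsum_subtype]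
  haveI := hfin'.fintype
  rw [tsum_fintype]
  have hcard : Nat.card ↥(Subtype.val ⁻¹' B : Set ↥φ) = Nat.card ↥(φ ∩ B) :=
    Nat.card_congr (Equiv.subtypeSubtypeEquivSubtypeInter (· ∈ φ) (· ∈ B))
  rw [Finset.sum_const, Finset.card_univ, ← Nat.card_eq_fintype_card, hcard, nsmul_eq_mul]

lemma stdNormalCDF_eq (t : ℝ) : stdNormalCDF t = ∫ u, Set.indicator (Set.Iio t) gpdf u := by
  rw [integral_indicator measurableSet_Iio]
  exact (setIntegral_congr_set Iio_ae_eq_Iic).symm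

lemma stdNormalCDF_nonneg (t : ℝ) : 0 ≤ stdNormalCDF t :=
  setIntegral_nonneg measurableSet_Iic fun u _ => gpdf_nonneg u

noncomputable def rad (β K s : ℝ) (n : ℕ) (u : ℝ) : ℝ :=
  Real.exp ((s - n/β - Real.sqrt n * u)/β)/K

lemma rad_pos {β K : ℝ} (hK : 0 < K) (s : ℝ) (n : ℕ) (u : ℝ) : 0 < rad β K s n u := by
  unfold rad; positivity

lemma rad_anti {β K : ℝ} (hβ : 0 < β) (hK : 0 < K) (s : ℝ) (n : ℕ) :
    Antitone (rad β K s n) := by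
  intro u v huv
  unfold rad
  gcongr

lemma rad_sq {β K : ℝ} (hβ : 0 < β) (s : ℝ) (n : ℕ) (u : ℝ) :
    (rad β K s n u) ^ 2
      = Real.exp (2*(s - n/β)/β)/K^2 * Real.exp (-(2*Real.sqrt n/β * u)) := by
  unfold rad
  rw [div_pow, sq, ← Real.exp_add, div_mul_eq_mul_div, ← Real.exp_add]
  congr 1
  field_simp
  ring

lemma rad_eq {β K : ℝ} (hβ : 0 < β) (s : ℝ) (n : ℕ) (u : ℝ) :
    rad β K s n u = Real.exp ((s - n/β)/β)/K * Real.exp (-(Real.sqrt n/β * u)) := by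
  unfold rad
  rw [div_mul_eq_mul_div, ← Real.exp_add]
  congr 1
  field_simp
  ring

lemma rad_sq_integrable {β K : ℝ} (hβ : 0 < β) (s : ℝ) (n : ℕ) :
    Integrable (fun u => (rad β K s n u) ^ 2 * gpdf u) := by
  simp_rw [rad_sq hβ, mul_assoc]
  exact (mgf_integrable _).const_mul _

lemma rad_integrable {β K : ℝ} (hβ : 0 < β) (s : ℝ) (n : ℕ) :
    Integrable (fun u => rad β K s n u * gpdf u) := by
  simp_rw [rad_eq hβ, mul_assoc]
  exact (mgf_integrable _).const_mul _

lemma rad_sq_integral {β K : ℝ} (hβ : 0 < β) (hK : 0 < K) (s : ℝ) (n : ℕ) :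
    ∫ u, (rad β K s n u) ^ 2 * gpdf u = Real.exp (2*s/β)/K^2 := by
  simp_rw [rad_sq hβ, mul_assoc]
  rw [integral_const_mul, mgf_eq, div_mul_eq_mul_div, ← Real.exp_add]
  congr 1
  rw [div_pow, mul_pow, Real.sq_sqrt (Nat.cast_nonneg n)]
  field_simp
  ring_nf
  congr 1
  linear_combination (2*s*β⁻¹) * mul_inv_cancel₀ hβ.ne'

lemma rad_integral {β K : ℝ} (hβ : 0 < β) (hK : 0 < K) (s : ℝ) (n : ℕ) :
    ∫ u, rad β K s n u * gpdf u
      = Real.exp (s/β)/K * Real.exp (-((n : ℝ)/(2*β^2))) := by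
  simp_rw [rad_eq hβ, mul_assoc]
  rw [integral_const_mul, mgf_eq, div_mul_eq_mul_div, ← Real.exp_add,
    div_mul_eq_mul_div, ← Real.exp_add]
  congr 1
  rw [div_pow, Real.sq_sqrt (Nat.cast_nonneg n)]
  field_simp
  ring

lemma rad_iff {β K : ℝ} (hβ : 0 < β) (hK : 0 < K) (s : ℝ) {n : ℕ} (hn : 1 ≤ n) {r : ℝ}
    (hr : 0 < r) (u : ℝ) :
    r < rad β K s n u ↔ u < (s - β * Real.log (K * r) - n/β)/Real.sqrt n := by
  have hn' : (0:ℝ) < n := by exact_mod_cast hn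
  have hsq : 0 < Real.sqrt n := Real.sqrt_pos.mpr hn'
  unfold rad
  rw [lt_div_iff₀ hK, show r * K = K * r from mul_comm r K,
    ← Real.log_lt_iff_lt_exp (by positivity), lt_div_iff₀ hβ, lt_div_iff₀ hsq]
  have e1 : Real.log (K*r)*β = β*Real.log (K*r) := mul_comm _ _
  have e2 : u*Real.sqrt n = Real.sqrt n * u := mul_comm _ _
  constructor <;> intro h <;> linarith

set_option maxHeartbeats 4000000 in
theorem stmt_5 (β K lam s : ℝ) (hβ : 2 < β) (hK : 0 < K) (hlam : 0 < lam)
    (φ : Set (EuclideanSpace ℝ (Fin 2))) (h0 : (0 : EuclideanSpace ℝ (Fin 2)) ∉ φ)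
    (hloc : ∀ B : Set (EuclideanSpace ℝ (Fin 2)), Bornology.IsBounded B → (φ ∩ B).Finite)
    (hhom : Tendsto (fun r : ℝ => (Nat.card ↥(φ ∩ Metric.ball 0 r) : ℝ) / (π * r ^ 2))
      atTop (nhds lam)) :
    Tendsto (fun n : ℕ =>
        ∑' X : φ, stdNormalCDF ((s - β * Real.log (K * ‖(X : EuclideanSpace ℝ (Fin 2))‖)
          - (n : ℝ) / β) / Real.sqrt (n : ℝ)))
      atTop (nhds (lam * π / K ^ 2 * Real.exp (2 * s / β))) := by
  classical
  have hβ0 : (0:ℝ) < β := by linarith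
  set N : ℝ → ℝ := fun r => (Nat.card ↥(φ ∩ Metric.ball 0 r) : ℝ) with hNdef
  -- countability of φ
  haveI hcount : Countable ↥φ := by
    have hϕ : φ ⊆ ⋃ k : ℕ, (φ ∩ Metric.ball 0 k) := by
      intro x hx
      obtain ⟨k, hk⟩ := exists_nat_gt (‖x‖)
      exact Set.mem_iUnion.mpr ⟨k, hx, mem_ball_zero_iff.mpr hk⟩
    exact ((Set.countable_iUnion fun k =>
      (hloc _ Metric.isBounded_ball).countable).mono hϕ).to_subtype
  have hN0 : ∀ r, 0 ≤ N r := fun r => Nat.cast_nonneg _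
  have hNmono : Monotone N := by
    intro a b hab
    have h := Nat.card_mono (hloc (Metric.ball 0 b) Metric.isBounded_ball)
      (Set.inter_subset_inter subset_rfl (Metric.ball_subset_ball hab))
    simp only [hNdef]
    exact_mod_cast h
  -- positive distance from the origin to φ
  obtain ⟨δ, hδ0, hδ1, hNδ⟩ : ∃ δ : ℝ, 0 < δ ∧ δ ≤ 1 ∧ ∀ r ≤ δ, N r = 0 := by
    have hFfin : (φ ∩ Metric.closedBall 0 1).Finite := hloc _ Metric.isBounded_closedBall
    have key : ∃ δ : ℝ, 0 < δ ∧ δ ≤ 1 ∧ ∀ x ∈ φ, δ ≤ ‖x‖ := by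
      by_cases hne : hFfin.toFinset.Nonempty
      · refine ⟨min 1 (hFfin.toFinset.inf' hne fun x => ‖x‖), ?_, min_le_left _ _, ?_⟩
        · refine lt_min one_pos ((Finset.lt_inf'_iff hne).mpr fun x hx => ?_)
          have hxφ : x ∈ φ := ((hFfin.mem_toFinset).mp hx).1
          have : x ≠ 0 := fun h => h0 (h ▸ hxφ)
          exact norm_pos_iff.mpr this
        · intro x hx
          rcases le_or_gt ‖x‖ 1 with h1 | h1
          · have hmem : x ∈ hFfin.toFinset := hFfin.mem_toFinset.mpr
              ⟨hx, by simpa [Metric.mem_closedBall, dist_zero_right] using h1⟩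
            exact le_trans (min_le_right _ _) (Finset.inf'_le _ hmem)
          · exact le_trans (min_le_left _ _) h1.le
      · refine ⟨1, one_pos, le_refl _, fun x hx => ?_⟩
        by_contra hlt
        push_neg at hlt
        exact hne ⟨x, hFfin.mem_toFinset.mpr ⟨hx, by
          simpa [Metric.mem_closedBall, dist_zero_right] using hlt.le⟩⟩
    obtain ⟨δ, hδ0, hδ1, hδ⟩ := key
    refine ⟨δ, hδ0, hδ1, fun r hr => ?_⟩
    have hempty : φ ∩ Metric.ball 0 r = ∅ := by
      ext x
      simp only [Set.mem_inter_iff, mem_ball_zero_iff, Set.mem_empty_iff_false, iff_false]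
      rintro ⟨hxφ, hxr⟩
      exact absurd (lt_of_lt_of_le hxr hr) (not_lt.mpr (hδ x hxφ))
    rw [hNdef]
    simp only [hempty]
    simp
  -- quadratic bound on N
  obtain ⟨A, B, hA, hB, hAB⟩ : ∃ A B : ℝ, 0 ≤ A ∧ 0 ≤ B ∧ ∀ r, N r ≤ A + B * r ^ 2 := by
    obtain ⟨M₀, hM₀⟩ := Metric.tendsto_atTop.mp hhom 1 one_pos
    set M := max M₀ 1 with hMdef
    have hM1 : (1:ℝ) ≤ M := le_max_right _ _
    refine ⟨N M, (lam + 1) * π, hN0 M, by positivity, fun r => ?_⟩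
    rcases le_or_gt r M with hrM | hMr
    · have h1 : N r ≤ N M := hNmono hrM
      nlinarith [mul_nonneg (mul_nonneg (by linarith : (0:ℝ) ≤ lam+1) Real.pi_pos.le) (sq_nonneg r)]
    · have hr0 : (0:ℝ) < r := lt_of_lt_of_le one_pos (le_trans hM1 hMr.le)
      have h := hM₀ r (le_trans (le_max_left _ _) hMr.le)
      rw [Real.dist_eq] at h
      have hπr : (0:ℝ) < π * r ^ 2 := by positivity
      have h2 : N r / (π * r ^ 2) < lam + 1 := by
        have := abs_sub_lt_iff.mp h
        linarith [this.1]
      have h3 : N r < (lam + 1) * (π * r ^ 2) := by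
        rwa [div_lt_iff₀ hπr] at h2
      nlinarith [hN0 M]
  -- measurability and integrability
  have hNmeas : ∀ n : ℕ, Measurable fun u => N (rad β K s n u) := fun n =>
    (hNmono.comp_antitone (rad_anti hβ0 hK s n)).measurable
  have hNint : ∀ n : ℕ, Integrable (fun u => N (rad β K s n u) * gpdf u) := by
    intro n
    refine Integrable.mono' ((gpdf_integrable.const_mul A).add
      ((rad_sq_integrable (K := K) hβ0 s n).const_mul B))
      (((hNmeas n).mul gpdf_cont.measurable).aestronglyMeasurable)
      (ae_of_all _ fun u => ?_)
    rw [Real.norm_eq_abs, abs_of_nonneg (mul_nonneg (hN0 _) (gpdf_nonneg _))]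
    calc N (rad β K s n u) * gpdf u ≤ (A + B * (rad β K s n u) ^ 2) * gpdf u :=
          mul_le_mul_of_nonneg_right (hAB _) (gpdf_nonneg u)
      _ = A * gpdf u + B * ((rad β K s n u) ^ 2 * gpdf u) := by ring
  set T : ℕ → ℝ := fun n => ∫ u, N (rad β K s n u) * gpdf u with hTdef
  set L : ℝ := lam * π / K ^ 2 * Real.exp (2 * s / β) with hLdef
  -- Step 1 : identification of the sum with the integral
  have hST : ∀ n : ℕ, 1 ≤ n →
      (∑' X : φ, stdNormalCDF ((s - β * Real.log (K * ‖(X : EuclideanSpace ℝ (Fin 2))‖)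
        - (n : ℝ) / β) / Real.sqrt (n : ℝ))) = T n := by
    intro n hn
    simp only [hTdef]
    classical
    set t : ℝ → ℝ := fun r => (s - β * Real.log (K * r) - (n:ℝ)/β)/Real.sqrt (n:ℝ) with htdef
    have hxpos : ∀ x : φ, 0 < ‖(x : EuclideanSpace ℝ (Fin 2))‖ := by
      intro x
      refine norm_pos_iff.mpr fun h => h0 (h ▸ x.2)
    -- indicator identity
    have hind : ∀ (x : φ) (u : ℝ), Set.indicator (Set.Iio (t ‖(x:EuclideanSpace ℝ (Fin 2))‖)) gpdf u
        = Set.indicator (Metric.ball 0 (rad β K s n u)) (fun _ => gpdf u)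
            (x : EuclideanSpace ℝ (Fin 2)) := by
      intro x u
      simp only [Set.indicator_apply, Set.mem_Iio, mem_ball_zero_iff]
      exact if_congr (rad_iff hβ0 hK s hn (hxpos x) u).symm rfl rfl
    -- pointwise tsum identity
    have htsum_u : ∀ u : ℝ,
        (∑' x : φ, Set.indicator (Set.Iio (t ‖(x:EuclideanSpace ℝ (Fin 2))‖)) gpdf u)
          = N (rad β K s n u) * gpdf u := by
      intro u
      rw [tsum_congr (fun x => hind x u),
        count_tsum φ (Metric.ball 0 (rad β K s n u)) (hloc _ Metric.isBounded_ball) (gpdf u),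
        hNdef]
    -- summability of the indicator family at fixed u
    have hsummable0 : ∀ u : ℝ, Summable
        (fun x : φ => Set.indicator (Set.Iio (t ‖(x:EuclideanSpace ℝ (Fin 2))‖)) gpdf u) := by
      intro u
      apply (summable_congr (fun x => hind x u)).mpr
      apply summable_of_finite_support
      have hsub : (Function.support fun x : φ =>
          Set.indicator (Metric.ball 0 (rad β K s n u)) (fun _ => gpdf u)
            (x : EuclideanSpace ℝ (Fin 2)))
          ⊆ Subtype.val ⁻¹' (φ ∩ Metric.ball 0 (rad β K s n u)) := by
        intro x hx
        have : (x : EuclideanSpace ℝ (Fin 2)) ∈ Metric.ball 0 (rad β K s n u) := by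
          by_contra hmem
          exact hx (Set.indicator_of_notMem hmem _)
        exact ⟨x.2, this⟩
      exact Set.Finite.subset (((hloc _ Metric.isBounded_ball).preimage
        (Subtype.val_injective.injOn)) ) hsub
    have hterm_int : ∀ x : φ, Integrable
        (fun u => Set.indicator (Set.Iio (t ‖(x:EuclideanSpace ℝ (Fin 2))‖)) gpdf u) :=
      fun x => gpdf_integrable.indicator measurableSet_Iio
    -- summability of the CDF terms
    have hsum_terms : Summable (fun x : φ =>
        stdNormalCDF (t ‖(x:EuclideanSpace ℝ (Fin 2))‖)) := by
      apply summable_of_sum_le (c := ∫ u, N (rad β K s n u) * gpdf u)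
        (fun x => stdNormalCDF_nonneg _)
      intro F
      have h1 : ∀ x ∈ F, stdNormalCDF (t ‖(x:EuclideanSpace ℝ (Fin 2))‖)
          = ∫ u, Set.indicator (Set.Iio (t ‖(x:EuclideanSpace ℝ (Fin 2))‖)) gpdf u :=
        fun x _ => stdNormalCDF_eq _
      rw [Finset.sum_congr rfl h1, ← integral_finset_sum F (fun x _ => hterm_int x)]
      refine integral_mono (integrable_finset_sum F (fun x _ => hterm_int x)) (hNint n)
        fun u => ?_
      calc (∑ x ∈ F, Set.indicator (Set.Iio (t ‖(x:EuclideanSpace ℝ (Fin 2))‖)) gpdf u)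
          ≤ ∑' x : φ, Set.indicator (Set.Iio (t ‖(x:EuclideanSpace ℝ (Fin 2))‖)) gpdf u :=
            Summable.sum_le_tsum F (fun x _ => Set.indicator_nonneg (fun _ _ => gpdf_nonneg u) _)
              (hsummable0 u)
        _ = N (rad β K s n u) * gpdf u := htsum_u u
    -- the exchange
    calc (∑' x : φ, stdNormalCDF (t ‖(x:EuclideanSpace ℝ (Fin 2))‖))
        = ∑' x : φ, ∫ u, Set.indicator
            (Set.Iio (t ‖(x:EuclideanSpace ℝ (Fin 2))‖)) gpdf u :=
          tsum_congr fun x => stdNormalCDF_eq _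
      _ = ∫ u, ∑' x : φ, Set.indicator
            (Set.Iio (t ‖(x:EuclideanSpace ℝ (Fin 2))‖)) gpdf u := by
          apply integral_tsum_of_summable_integral_norm (fun x => hterm_int x)
          have heq : (fun x : φ => ∫ u, ‖Set.indicator
              (Set.Iio (t ‖(x:EuclideanSpace ℝ (Fin 2))‖)) gpdf u‖)
              = fun x : φ => stdNormalCDF (t ‖(x:EuclideanSpace ℝ (Fin 2))‖) := by
            funext x
            rw [stdNormalCDF_eq]
            congr 1 with u
            rw [Real.norm_eq_abs,
              abs_of_nonneg (Set.indicator_nonneg (fun _ _ => gpdf_nonneg _) _)]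
          rw [heq]
          exact hsum_terms
      _ = ∫ u, N (rad β K s n u) * gpdf u := integral_congr_ae (Eventually.of_forall htsum_u)
  -- Step 2 : quantitative bound
  have hmain : ∀ ε > (0:ℝ), ∃ C, 0 ≤ C ∧ ∀ n : ℕ,
      |T n - L| ≤ ε + C * Real.exp (-((n:ℝ)/(2*β^2))) := by
    simp only [hTdef]
    intro ε hε
    set ε₁ := ε * K^2 / (π * Real.exp (2*s/β)) with hε₁def
    have hε₁ : 0 < ε₁ := by positivity
    obtain ⟨M₀, hM₀⟩ := Metric.tendsto_atTop.mp hhom ε₁ hε₁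
    set M := max M₀ 1 with hMdef
    have hM1 : (1:ℝ) ≤ M := le_max_right _ _
    have hM0 : (0:ℝ) < M := lt_of_lt_of_le one_pos hM1
    have hNear : ∀ r, M ≤ r → |N r - lam*π*r^2| ≤ ε₁*(π*r^2) := by
      intro r hr
      have hr0 : (0:ℝ) < r := lt_of_lt_of_le hM0 hr
      have h := hM₀ r (le_trans (le_max_left _ _) hr)
      rw [Real.dist_eq] at h
      have hπr : (0:ℝ) < π * r^2 := by positivity
      have hkey : (N r/(π*r^2) - lam) * (π*r^2) = N r - lam*π*r^2 := by
        rw [sub_mul, div_mul_cancel₀ _ hπr.ne']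
        ring
      have heq : |N r - lam*π*r^2| = |N r/(π*r^2) - lam| * (π*r^2) := by
        rw [← hkey, abs_mul, abs_of_pos hπr]
      rw [heq]
      exact mul_le_mul_of_nonneg_right h.le hπr.le
    set C₁ := (N M + lam*π*M^2)/δ^2 with hC₁def
    have hC₁0 : 0 ≤ C₁ :=
      div_nonneg (add_nonneg (hN0 M) (by positivity)) (sq_nonneg δ)
    have hlamπ_le : lam*π ≤ C₁ := by
      rw [hC₁def, le_div_iff₀ (by positivity)]
      have hδsq : δ^2 ≤ 1 := by nlinarith
      have hMsq : (1:ℝ) ≤ M^2 := by nlinarith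
      nlinarith [hN0 M, mul_nonneg (mul_pos hlam Real.pi_pos).le (by linarith : (0:ℝ) ≤ M^2 - δ^2)]
    have hPoint : ∀ r, 0 < r → |N r - lam*π*r^2| ≤ ε₁*(π*r^2) + C₁*M*r := by
      intro r hr
      rcases le_or_gt M r with hMr | hrM
      · have h1 := hNear r hMr
        have h2 : 0 ≤ C₁*M*r := by positivity
        linarith
      · have hε₁r : 0 ≤ ε₁*(π*r^2) := by positivity
        rcases le_or_gt r δ with hrδ | hδr
        · rw [hNδ r hrδ, zero_sub, abs_neg, abs_of_nonneg (by positivity)]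
          have key : lam*π*r ≤ C₁*M := by
            calc lam*π*r ≤ C₁*r := mul_le_mul_of_nonneg_right hlamπ_le hr.le
              _ ≤ C₁*M := mul_le_mul_of_nonneg_left hrM.le hC₁0
          nlinarith [key, hr]
        · have h1 : |N r - lam*π*r^2| ≤ N M + lam*π*M^2 := by
            have hNr : N r ≤ N M := hNmono hrM.le
            have hr2 : r^2 ≤ M^2 := by nlinarith
            have h2 : lam*π*r^2 ≤ lam*π*M^2 := by
              nlinarith [mul_nonneg (mul_pos hlam Real.pi_pos).le (sub_nonneg.mpr hr2)]
            rw [abs_le]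
            constructor
            · nlinarith [hN0 r, Real.pi_pos]
            · nlinarith [Real.pi_pos, sq_nonneg r]
          have h2 : N M + lam*π*M^2 = C₁*δ^2 := by
            rw [hC₁def]
            field_simp
          have hδ2 : δ^2 ≤ M*r := by
            have e1 : δ^2 ≤ δ := by nlinarith
            have e2 : r ≤ M*r := le_mul_of_one_le_left hr.le hM1
            linarith
          have h3 : C₁*δ^2 ≤ C₁*M*r := by
            calc C₁*δ^2 ≤ C₁*(M*r) := mul_le_mul_of_nonneg_left hδ2 hC₁0
              _ = C₁*M*r := (mul_assoc _ _ _).symm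
          linarith
    refine ⟨C₁*M*(Real.exp (s/β)/K), by positivity, fun n => ?_⟩
    -- bound integrand
    have hbnd_int : Integrable (fun u =>
        ε₁*π*((rad β K s n u)^2 * gpdf u) + C₁*M*(rad β K s n u * gpdf u)) :=
      ((rad_sq_integrable hβ0 s n).const_mul _).add ((rad_integrable hβ0 s n).const_mul _)
    have hlam_int : Integrable (fun u => lam*π*((rad β K s n u)^2 * gpdf u)) :=
      (rad_sq_integrable hβ0 s n).const_mul _
    have hL_int : ∫ u, lam*π*((rad β K s n u)^2 * gpdf u) = L := by
      rw [integral_const_mul, rad_sq_integral hβ0 hK s n, hLdef]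
      ring
    have hdiff_int : Integrable (fun u =>
        N (rad β K s n u) * gpdf u - lam*π*((rad β K s n u)^2 * gpdf u)) :=
      (hNint n).sub hlam_int
    have h1 : (∫ u, N (rad β K s n u) * gpdf u) - L
        = ∫ u, (N (rad β K s n u) * gpdf u - lam*π*((rad β K s n u)^2 * gpdf u)) := by
      rw [integral_sub (hNint n) hlam_int, hL_int]
    have h2 : |(∫ u, N (rad β K s n u) * gpdf u) - L|
        ≤ ∫ u, (ε₁*π*((rad β K s n u)^2 * gpdf u) + C₁*M*(rad β K s n u * gpdf u)) := by
      rw [h1]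
      refine le_trans ?_ (integral_mono hdiff_int.abs hbnd_int fun u => ?_)
      · simpa [Real.norm_eq_abs] using
          norm_integral_le_integral_norm (fun u =>
            N (rad β K s n u) * gpdf u - lam*π*((rad β K s n u)^2 * gpdf u))
      · have habs : |N (rad β K s n u) * gpdf u - lam*π*((rad β K s n u)^2 * gpdf u)|
            = |N (rad β K s n u) - lam*π*(rad β K s n u)^2| * gpdf u := by
          rw [show N (rad β K s n u) * gpdf u - lam*π*((rad β K s n u)^2 * gpdf u)
            = (N (rad β K s n u) - lam*π*(rad β K s n u)^2) * gpdf u from by ring,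
            abs_mul, abs_of_nonneg (gpdf_nonneg u)]
        rw [habs]
        calc |N (rad β K s n u) - lam*π*(rad β K s n u)^2| * gpdf u
            ≤ (ε₁*(π*(rad β K s n u)^2) + C₁*M*(rad β K s n u)) * gpdf u := by
              refine mul_le_mul_of_nonneg_right ?_ (gpdf_nonneg u)
              have := hPoint (rad β K s n u) (rad_pos hK s n u)
              calc |N (rad β K s n u) - lam*π*(rad β K s n u)^2|
                  = |N (rad β K s n u) - lam*(π*(rad β K s n u)^2)| := by rw [mul_assoc]
                _ ≤ _ := by
                    have h' := hPoint (rad β K s n u) (rad_pos hK s n u)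
                    calc |N (rad β K s n u) - lam*(π*(rad β K s n u)^2)|
                        = |N (rad β K s n u) - lam*π*(rad β K s n u)^2| := by rw [← mul_assoc]
                      _ ≤ ε₁*(π*(rad β K s n u)^2) + C₁*M*(rad β K s n u) := h'
          _ = ε₁*π*((rad β K s n u)^2 * gpdf u) + C₁*M*(rad β K s n u * gpdf u) := by ring
    have h3 : ∫ u, (ε₁*π*((rad β K s n u)^2 * gpdf u) + C₁*M*(rad β K s n u * gpdf u))
        = ε₁*π*(Real.exp (2*s/β)/K^2)
          + C₁*M*(Real.exp (s/β)/K * Real.exp (-((n:ℝ)/(2*β^2)))) := by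
      rw [integral_add (((rad_sq_integrable hβ0 s n)).const_mul _)
        ((rad_integrable hβ0 s n).const_mul _), integral_const_mul, integral_const_mul,
        rad_sq_integral hβ0 hK s n, rad_integral hβ0 hK s n]
    have hε₁val : ε₁*π*(Real.exp (2*s/β)/K^2) = ε := by
      rw [hε₁def]
      field_simp
    calc |(∫ u, N (rad β K s n u) * gpdf u) - L|
        ≤ ε₁*π*(Real.exp (2*s/β)/K^2)
          + C₁*M*(Real.exp (s/β)/K * Real.exp (-((n:ℝ)/(2*β^2)))) := h2.trans (le_of_eq h3)
      _ = ε + C₁*M*(Real.exp (s/β)/K) * Real.exp (-((n:ℝ)/(2*β^2))) := by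
          rw [hε₁val]; ring
  -- Step 3 : T tends to L
  have htendT : Tendsto T atTop (nhds L) := by
    rw [Metric.tendsto_atTop]
    intro ε hε
    obtain ⟨C, hC0, hbound⟩ := hmain (ε/2) (half_pos hε)
    have hexp : Tendsto (fun n : ℕ => C * Real.exp (-((n:ℝ)/(2*β^2)))) atTop (nhds 0) := by
      rw [show (0:ℝ) = C * 0 by ring]
      apply Tendsto.const_mul
      apply Real.tendsto_exp_atBot.comp
      have h1 : Tendsto (fun n : ℕ => (n:ℝ)/(2*β^2)) atTop atTop :=
        (tendsto_natCast_atTop_atTop (R := ℝ)).atTop_div_const (by positivity)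
      exact tendsto_neg_atBot_iff.mpr h1
    obtain ⟨N₁, hN₁⟩ := eventually_atTop.mp (hexp.eventually_lt_const (half_pos hε))
    refine ⟨N₁, fun n hn => ?_⟩
    rw [Real.dist_eq]
    calc |T n - L| ≤ ε/2 + C * Real.exp (-((n:ℝ)/(2*β^2))) := hbound n
      _ < ε/2 + ε/2 := by linarith [hN₁ n hn]
      _ = ε := by ring
  refine htendT.congr' ?_
  filter_upwards [eventually_ge_atTop 1] with n hn
  exact (hST n hn).symm
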